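/- In the fluid model with early birds and T ≤ Δ/μ, the price of anarchy PoA(α) (as defined by the ratio of equilibrium to optimal social cost) is monotonically increasing in α on (0, ∞) when 0 < μT < Δ and β > 0. -/

import Mathlib

/-- Fluid model with early birds and `0 < μT < Δ`, `β > 0`: the price of
anarchy is strictly increasing in the waiting cost `α` on `(0, ∞)`. -/
theorem fluid_PoA_monotone (Δ μ β T : ℝ)
    (hΔ : 0 < Δ) (hμ : 0 < μ) (hβ : 0 < β) (hT : 0 < T) (hTd : μ * T < Δ) :
    StrictMonoOn
      (fun α : ℝ => (Δ * (Δ * (α + β) - α * μ * T) / μ) /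
        (μ * β / 2 * T ^ 2
          + (Δ - μ * T) * (β * T + (Δ - μ * T) / (2 * μ) * (α + β))))
      (Set.Ioi (0 : ℝ)) := by
  intro a ha b hb hab
  simp only [Set.mem_Ioi] at ha hb
  have hD : 0 < Δ - μ * T := by linarith
  have hden : ∀ x : ℝ, 0 < x →
      0 < μ * β / 2 * T ^ 2
        + (Δ - μ * T) * (β * T + (Δ - μ * T) / (2 * μ) * (x + β)) := by
    intro x hx
    have h1 : 0 < (Δ - μ * T) / (2 * μ) * (x + β) := by positivity
    have : 0 < β * T + (Δ - μ * T) / (2 * μ) * (x + β) := by positivity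
    positivity
  have ha' := hden a ha
  have hb' := hden b hb
  simp only
  rw [div_lt_div_iff₀ ha' hb']
  have hμ' : μ ≠ 0 := ne_of_gt hμ
  have hba : 0 < b - a := by linarith
  have hmi : 0 < μ⁻¹ ^ 2 := by positivity
  have key : 0 < (b - a) * Δ * β * μ * T * (Δ * Δ - Δ * (μ * T)) * μ⁻¹ ^ 2 := by
    have h1 : 0 < Δ * Δ - Δ * (μ * T) := by nlinarith
    have h2 : 0 < (b - a) * Δ * β * μ * T := by positivity
    exact mul_pos (mul_pos h2 h1) hmi
  field_simp
  ring_nf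
  nlinarith [key, mul_pos (mul_pos (mul_pos (mul_pos (mul_pos hba hΔ) hβ) hμ) hT) hD]
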